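/- Under union monotonic dir_Δ functions, the dependency-graph construction for an eGDN G with initially modified slots S_i either terminates without aborting for every possible queue ordering, or aborts for every possible queue ordering. -/

import Mathlib

/-- A state of the dependency-graph construction: the queue of operation nodes,
the recorded sets `C[o]` of input slots with potentially unhandled deltas, and
the edge set of the trigger graph `G_T`. -/
structure CState (O S : Type*) where
  queue : List O
  C : O → Set S
  edges : Set (O × O)

section

variable {O S : Type*} (inS outS : O → Set S)

/-- An operation node `o` is adjacent to the slot set `X`. -/
def Adjacent (X : Set S) (o : O) : Prop :=
  ((inS o ∪ outS o) ∩ X).Nonempty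

/-- Initial state for the set `Si` of initially modified slots: the queue
enumerates (without repetition) exactly the operation nodes adjacent to `Si`,
`C[o] = Si ∩ in(o)` for all nodes adjacent to `Si` (and in particular for all
nodes), and the edge set is empty. -/
def Init (Si : Set S) (st : CState O S) : Prop :=
  st.queue.Nodup ∧
  (∀ o, o ∈ st.queue ↔ Adjacent inS outS Si o) ∧
  (∀ o, st.C o = Si ∩ inS o) ∧
  st.edges = ∅

/-- One construction step: dequeue `o`, compute `S_o = dir_Δ(o, C[o])`, add an
edge from `o` to every node adjacent to `S_o` other than `o`, add `S_o ∩ in(o')`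
to `C[o']` for all such nodes `o'`, enqueue them if absent, and reset `C[o]`. -/
def CStep (dirΔ : O → Set S → Set S) (st st' : CState O S) : Prop :=
  ∃ o q, st.queue = o :: q ∧
    st'.edges = st.edges ∪
      {p | p.1 = o ∧ p.2 ≠ o ∧ Adjacent inS outS (dirΔ o (st.C o)) p.2} ∧
    st'.C o = ∅ ∧
    (∀ o'', o'' ≠ o → st'.C o'' = st.C o'' ∪
        {x | x ∈ dirΔ o (st.C o) ∩ inS o'' ∧
          Adjacent inS outS (dirΔ o (st.C o)) o''}) ∧
    st'.queue.Nodup ∧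
    (∀ o', o' ∈ st'.queue ↔
      o' ∈ q ∨ (o' ≠ o ∧ Adjacent inS outS (dirΔ o (st.C o)) o'))

/-- A terminating (complete) execution of the construction in `n` steps. -/
def Exec (dirΔ : O → Set S → Set S) (Si : Set S)
    (f : ℕ → CState O S) (n : ℕ) : Prop :=
  Init inS outS Si (f 0) ∧
  (∀ k < n, CStep inS outS dirΔ (f k) (f (k + 1))) ∧
  (f n).queue = []

/-- The edge set contains a directed cycle (the construction aborts). -/
def HasCycle (E : Set (O × O)) : Prop :=
  ∃ v, Relation.TransGen (fun a b => (a, b) ∈ E) v v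

end

section Aux

variable {O S : Type*} {inS outS : O → Set S} {dirΔ : O → Set S → Set S}

lemma dmono (hum : ∀ o A B, dirΔ o A ∪ dirΔ o B = dirΔ o (A ∪ B)) {o : O} {A B : Set S}
    (h : A ⊆ B) : dirΔ o A ⊆ dirΔ o B := by
  have h2 := hum o A B
  rw [Set.union_eq_self_of_subset_left h] at h2
  rw [← h2]
  exact Set.subset_union_left

lemma adj_mono {X Y : Set S} (h : X ⊆ Y) {o : O} (ha : Adjacent inS outS X o) :
    Adjacent inS outS Y o := by
  obtain ⟨x, hx1, hx2⟩ := ha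
  exact ⟨x, hx1, h hx2⟩

lemma dir_biUnion (hum : ∀ o A B, dirΔ o A ∪ dirΔ o B = dirΔ o (A ∪ B)) {ι : Type}
    (o : O) (A : ι → Set S) :
    ∀ s : Finset ι, s.Nonempty → dirΔ o (⋃ i ∈ s, A i) = ⋃ i ∈ s, dirΔ o (A i) := by
  classical
  intro s
  induction s using Finset.induction_on with
  | empty => intro h; simp at h
  | @insert a s' ha ih =>
      intro _
      rcases s'.eq_empty_or_nonempty with h | h
      · subst h; simp
      · rw [Finset.set_biUnion_insert, Finset.set_biUnion_insert, ← hum, ih h]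

/-- The monotone operator whose least fixed point captures the processed nodes
and the accumulated inputs of any terminating execution. -/
def Phi (inS outS : O → Set S) (dirΔ : O → Set S → Set S) (Si : Set S)
    (hum : ∀ o A B, dirΔ o A ∪ dirΔ o B = dirΔ o (A ∪ B)) :
    Set O × (O → Set S) →o Set O × (O → Set S) where
  toFun pu :=
    ({o | Adjacent inS outS Si o ∨ ∃ o', o' ∈ pu.1 ∧ o' ≠ o ∧
        Adjacent inS outS (dirΔ o' (pu.2 o')) o},
     fun o => (Si ∩ inS o) ∪ ⋃ o'' ∈ {o' | o' ∈ pu.1 ∧ o' ≠ o}, (dirΔ o'' (pu.2 o'') ∩ inS o))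
  monotone' := by
    rintro ⟨P, U⟩ ⟨Q, V⟩ ⟨hPQ, hUV⟩
    refine ⟨fun o ho => ?_, fun o => ?_⟩
    · rcases ho with h | ⟨o', h1, h2, h3⟩
      · exact Or.inl h
      · exact Or.inr ⟨o', hPQ h1, h2, adj_mono (dmono hum (hUV o')) h3⟩
    · intro x hx
      rcases hx with h | h
      · exact Or.inl h
      · obtain ⟨o', ⟨h1, h2⟩, hx1, hx2⟩ := Set.mem_iUnion₂.mp h
        exact Or.inr (Set.mem_iUnion₂.mpr ⟨o', ⟨hPQ h1, h2⟩, dmono hum (hUV o') hx1, hx2⟩)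

def Pstar (inS outS : O → Set S) (dirΔ : O → Set S → Set S) (Si : Set S)
    (hum : ∀ o A B, dirΔ o A ∪ dirΔ o B = dirΔ o (A ∪ B)) : Set O :=
  (OrderHom.lfp (Phi inS outS dirΔ Si hum)).1

def Ustar (inS outS : O → Set S) (dirΔ : O → Set S → Set S) (Si : Set S)
    (hum : ∀ o A B, dirΔ o A ∪ dirΔ o B = dirΔ o (A ∪ B)) : O → Set S :=
  (OrderHom.lfp (Phi inS outS dirΔ Si hum)).2

/-- The canonical (order-independent) final edge set. -/
def CanE (inS outS : O → Set S) (dirΔ : O → Set S → Set S) (Si : Set S)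
    (hum : ∀ o A B, dirΔ o A ∪ dirΔ o B = dirΔ o (A ∪ B)) : Set (O × O) :=
  {p | p.1 ∈ Pstar inS outS dirΔ Si hum ∧ p.2 ≠ p.1 ∧
    Adjacent inS outS (dirΔ p.1 (Ustar inS outS dirΔ Si hum p.1)) p.2}

section FixedPt

variable (Si : Set S) (hum : ∀ o A B, dirΔ o A ∪ dirΔ o B = dirΔ o (A ∪ B))

lemma mem_Pstar_of_adj {o : O} (h : Adjacent inS outS Si o) :
    o ∈ Pstar inS outS dirΔ Si hum := by
  have hfix := OrderHom.map_lfp (Phi inS outS dirΔ Si hum)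
  have h2 : o ∈ ((Phi inS outS dirΔ Si hum) (OrderHom.lfp (Phi inS outS dirΔ Si hum))).1 :=
    Or.inl h
  rw [hfix] at h2
  exact h2

lemma mem_Pstar_of_step {o' o : O} (h1 : o' ∈ Pstar inS outS dirΔ Si hum) (h2 : o' ≠ o)
    (h3 : Adjacent inS outS (dirΔ o' (Ustar inS outS dirΔ Si hum o')) o) :
    o ∈ Pstar inS outS dirΔ Si hum := by
  have hfix := OrderHom.map_lfp (Phi inS outS dirΔ Si hum)
  have h4 : o ∈ ((Phi inS outS dirΔ Si hum) (OrderHom.lfp (Phi inS outS dirΔ Si hum))).1 :=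
    Or.inr ⟨o', h1, h2, h3⟩
  rw [hfix] at h4
  exact h4

lemma Si_inter_subset_Ustar (o : O) : Si ∩ inS o ⊆ Ustar inS outS dirΔ Si hum o := by
  intro x hx
  have hfix := OrderHom.map_lfp (Phi inS outS dirΔ Si hum)
  have h2 : x ∈ ((Phi inS outS dirΔ Si hum) (OrderHom.lfp (Phi inS outS dirΔ Si hum))).2 o :=
    Or.inl hx
  rw [hfix] at h2
  exact h2

lemma step_subset_Ustar {o' o : O} (h1 : o' ∈ Pstar inS outS dirΔ Si hum) (h2 : o' ≠ o) :
    dirΔ o' (Ustar inS outS dirΔ Si hum o') ∩ inS o ⊆ Ustar inS outS dirΔ Si hum o := by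
  intro x hx
  have hfix := OrderHom.map_lfp (Phi inS outS dirΔ Si hum)
  have h4 : x ∈ ((Phi inS outS dirΔ Si hum) (OrderHom.lfp (Phi inS outS dirΔ Si hum))).2 o :=
    Or.inr (Set.mem_iUnion₂.mpr ⟨o', ⟨h1, h2⟩, hx⟩)
  rw [hfix] at h4
  exact h4

end FixedPt

end Aux

section ExecLemmas

variable {O S : Type*} {inS outS : O → Set S} {dirΔ : O → Set S → Set S}
variable {Si : Set S} {f : ℕ → CState O S} {n : ℕ}

open Classical in
/-- The steps at which node `o` is processed. -/
noncomputable def pset (f : ℕ → CState O S) (n : ℕ) (o : O) : Finset ℕ :=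
  (Finset.range n).filter fun k => ∃ q, (f k).queue = o :: q

/-- Nodes processed at some point. -/
def Pf (f : ℕ → CState O S) (n : ℕ) : Set O :=
  {o | ∃ k, k < n ∧ ∃ q, (f k).queue = o :: q}

/-- Total accumulated input of a node over the whole execution. -/
noncomputable def Uf (f : ℕ → CState O S) (n : ℕ) (o : O) : Set S :=
  ⋃ k ∈ pset f n o, (f k).C o

lemma mem_pset {k : ℕ} {o : O} :
    k ∈ pset f n o ↔ k < n ∧ ∃ q, (f k).queue = o :: q := by
  simp [pset]

lemma C_subset_Uf {k : ℕ} {o : O} (hk : k ∈ pset f n o) : (f k).C o ⊆ Uf f n o :=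
  fun x hx => Set.mem_iUnion₂.mpr ⟨k, hk, hx⟩

/-- If a node is in the queue, it is eventually processed, and its current
`C`-set survives until that processing step. -/
lemma stay (hf : Exec inS outS dirΔ Si f n) :
    ∀ d k, k ≤ n → n - k ≤ d → ∀ a ∈ (f k).queue,
      ∃ j, k ≤ j ∧ j < n ∧ (∃ q, (f j).queue = a :: q) ∧ (f k).C a ⊆ (f j).C a := by
  intro d
  induction d with
  | zero =>
      intro k hk hd a ha
      have hkn : k = n := by omega
      subst hkn
      rw [hf.2.2] at ha
      simp at ha
  | succ d ih =>
      intro k hk hd a ha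
      rcases eq_or_lt_of_le hk with hkn | hkn
      · subst hkn; rw [hf.2.2] at ha; simp at ha
      · obtain ⟨o, q, hq, he, hCo, hC, hnd, hmem⟩ := hf.2.1 k hkn
        by_cases hao : a = o
        · exact ⟨k, le_rfl, hkn, ⟨q, hao ▸ hq⟩, subset_rfl⟩
        · have haq : a ∈ q := by
            rw [hq] at ha
            rcases List.mem_cons.mp ha with h | h
            · exact absurd h hao
            · exact h
          have ha' : a ∈ (f (k + 1)).queue := (hmem a).mpr (Or.inl haq)
          have hCa : (f k).C a ⊆ (f (k + 1)).C a := by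
            rw [hC a hao]; exact Set.subset_union_left
          obtain ⟨j, hj1, hj2, hj3, hj4⟩ := ih (k + 1) hkn (by omega) a ha'
          exact ⟨j, by omega, hj2, hj3, hCa.trans hj4⟩

lemma stay' (hf : Exec inS outS dirΔ Si f n) {k : ℕ} (hk : k ≤ n) {a : O}
    (ha : a ∈ (f k).queue) :
    ∃ j, k ≤ j ∧ j < n ∧ (∃ q, (f j).queue = a :: q) ∧ (f k).C a ⊆ (f j).C a :=
  stay hf (n - k) k hk le_rfl a ha

/-- Members of the queue end up contributing their `C`-set to `Uf`. -/
lemma C_subset_Uf_of_queue (hf : Exec inS outS dirΔ Si f n) {k : ℕ} (hk : k ≤ n) {a : O}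
    (ha : a ∈ (f k).queue) : (f k).C a ⊆ Uf f n a := by
  obtain ⟨j, _, hj2, hj3, hj4⟩ := stay' hf hk ha
  exact hj4.trans (C_subset_Uf (mem_pset.mpr ⟨hj2, hj3⟩))

/-- A node not in the queue has empty `C`-set. -/
lemma notq (hf : Exec inS outS dirΔ Si f n) :
    ∀ k ≤ n, ∀ o, o ∉ (f k).queue → (f k).C o = ∅ := by
  intro k
  induction k with
  | zero =>
      intro _ o ho
      rw [(hf.1.2.2.1) o]
      rw [Set.eq_empty_iff_forall_notMem]
      intro x hx
      exact ho (((hf.1.2.1) o).mpr ⟨x, Or.inl hx.2, hx.1⟩)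
  | succ k ih =>
      intro hk1 o ho
      have hk : k < n := hk1
      obtain ⟨o₀, q, hq, he, hCo, hC, hnd, hmem⟩ := hf.2.1 k hk
      by_cases h : o = o₀
      · subst h; exact hCo
      · rw [hC o h]
        have hnotq : o ∉ q ∧ ¬(o ≠ o₀ ∧ Adjacent inS outS (dirΔ o₀ ((f k).C o₀)) o) := by
          constructor
          · intro hmm; exact ho ((hmem o).mpr (Or.inl hmm))
          · intro hmm; exact ho ((hmem o).mpr (Or.inr hmm))
        have hnadj : ¬ Adjacent inS outS (dirΔ o₀ ((f k).C o₀)) o :=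
          fun hadj => hnotq.2 ⟨h, hadj⟩
        have h1 : (f k).C o = ∅ := by
          apply ih (le_of_lt hk)
          rw [hq]
          intro hmm
          rcases List.mem_cons.mp hmm with h' | h'
          · exact h h'
          · exact hnotq.1 h'
        rw [h1]
        rw [Set.eq_empty_iff_forall_notMem]
        rintro x (hx | hx)
        · exact hx
        · exact hnadj hx.2

lemma edges_mono (hf : Exec inS outS dirΔ Si f n) :
    ∀ l ≤ n, ∀ k ≤ l, (f k).edges ⊆ (f l).edges := by
  intro l
  induction l with
  | zero =>
      intro _ k hk
      have : k = 0 := Nat.le_zero.mp hk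
      subst this; exact subset_rfl
  | succ l ih =>
      intro hl k hk
      rcases Nat.lt_or_ge k (l + 1) with h | h
      · have hl' : l < n := hl
        obtain ⟨o₀, q, hq, he, _⟩ := hf.2.1 l hl'
        refine (ih (by omega) k (by omega)).trans ?_
        rw [he]
        exact Set.subset_union_left
      · have : k = l + 1 := by omega
        subst this; exact subset_rfl

/-- Decomposition of `dirΔ` over the accumulated input of a processed node. -/
lemma dir_Uf_subset (hum : ∀ o A B, dirΔ o A ∪ dirΔ o B = dirΔ o (A ∪ B))
    {o' : O} (h : o' ∈ Pf f n) {x : S} (hx : x ∈ dirΔ o' (Uf f n o')) :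
    ∃ k ∈ pset f n o', x ∈ dirΔ o' ((f k).C o') := by
  obtain ⟨k0, hk0, hq0⟩ := h
  have hne : (pset f n o').Nonempty := ⟨k0, mem_pset.mpr ⟨hk0, hq0⟩⟩
  have heq := dir_biUnion hum o' (fun k => (f k).C o') (pset f n o') hne
  rw [Uf, heq] at hx
  obtain ⟨k, hk, hxk⟩ := Set.mem_iUnion₂.mp hx
  exact ⟨k, hk, hxk⟩

end ExecLemmas

section Main

variable {O S : Type*} {inS outS : O → Set S} {dirΔ : O → Set S → Set S}
variable {Si : Set S} {f : ℕ → CState O S} {n : ℕ}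

/-- Invariant: everything occurring in the execution is bounded by the least
fixed point data. -/
lemma upper (hum : ∀ o A B, dirΔ o A ∪ dirΔ o B = dirΔ o (A ∪ B))
    (hf : Exec inS outS dirΔ Si f n) :
    ∀ k ≤ n, (∀ o ∈ (f k).queue, o ∈ Pstar inS outS dirΔ Si hum) ∧
      (∀ o, (f k).C o ⊆ Ustar inS outS dirΔ Si hum o) ∧
      (f k).edges ⊆ CanE inS outS dirΔ Si hum := by
  intro k
  induction k with
  | zero =>
      intro _
      refine ⟨?_, ?_, ?_⟩
      · intro o ho
        exact mem_Pstar_of_adj Si hum ((hf.1.2.1 o).mp ho)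
      · intro o
        rw [hf.1.2.2.1 o]
        exact Si_inter_subset_Ustar Si hum o
      · rw [hf.1.2.2.2]
        exact Set.empty_subset _
  | succ k ih =>
      intro hk1
      have hk : k < n := hk1
      obtain ⟨hQ, hCs, hE⟩ := ih (le_of_lt hk)
      obtain ⟨o, q, hq, he, hCo, hC, hnd, hmem⟩ := hf.2.1 k hk
      have hoP : o ∈ Pstar inS outS dirΔ Si hum := hQ o (hq ▸ (List.mem_cons_self : o ∈ o :: q))
      have hdir : dirΔ o ((f k).C o) ⊆ dirΔ o (Ustar inS outS dirΔ Si hum o) :=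
        dmono hum (hCs o)
      refine ⟨?_, ?_, ?_⟩
      · intro o' ho'
        rcases (hmem o').mp ho' with h | ⟨hne, hadj⟩
        · exact hQ o' (hq ▸ List.mem_cons_of_mem o h)
        · exact mem_Pstar_of_step Si hum hoP (Ne.symm hne) (adj_mono hdir hadj)
      · intro o''
        by_cases h : o'' = o
        · subst h; rw [hCo]; exact Set.empty_subset _
        · rw [hC o'' h]
          apply Set.union_subset (hCs o'')
          rintro x ⟨⟨hx1, hx2⟩, -⟩
          exact step_subset_Ustar Si hum hoP (Ne.symm h) ⟨hdir hx1, hx2⟩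
      · rw [he]
        apply Set.union_subset hE
        rintro ⟨a, b⟩ ⟨h1, h2, h3⟩
        simp only at h1 h2 h3
        subst h1
        exact ⟨hoP, h2, adj_mono hdir h3⟩

/-- The execution data is a prefixed point of `Phi`. -/
lemma prefixed (hum : ∀ o A B, dirΔ o A ∪ dirΔ o B = dirΔ o (A ∪ B))
    (hf : Exec inS outS dirΔ Si f n) :
    Phi inS outS dirΔ Si hum (Pf f n, Uf f n) ≤ (Pf f n, Uf f n) := by
  constructor
  · -- processed component
    rintro o (h | ⟨o', ho', hne, hadj⟩)
    · have h0 : o ∈ (f 0).queue := (hf.1.2.1 o).mpr h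
      obtain ⟨j, _, hj2, hj3, _⟩ := stay' hf (Nat.zero_le n) h0
      exact ⟨j, hj2, hj3⟩
    · obtain ⟨x, hx1, hx2⟩ := hadj
      obtain ⟨k, hk, hxk⟩ := dir_Uf_subset hum ho' hx2
      obtain ⟨hkn, qk, hqk⟩ := mem_pset.mp hk
      obtain ⟨o₀, q₀, hq₀, he, hCo, hC, hnd, hmem⟩ := hf.2.1 k hkn
      rw [hqk] at hq₀
      injection hq₀ with ho₀ hq₀'
      subst ho₀; subst hq₀'
      have hoQ : o ∈ (f (k + 1)).queue :=
        (hmem o).mpr (Or.inr ⟨Ne.symm hne, ⟨x, hx1, hxk⟩⟩)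
      obtain ⟨j, _, hj2, hj3, _⟩ := stay' hf hkn hoQ
      exact ⟨j, hj2, hj3⟩
  · -- accumulated-input component
    intro o x hx
    rcases hx with h | h
    · have hadj : Adjacent inS outS Si o := ⟨x, Or.inl h.2, h.1⟩
      have h0 : o ∈ (f 0).queue := (hf.1.2.1 o).mpr hadj
      have hC0 : x ∈ (f 0).C o := by rw [hf.1.2.2.1 o]; exact h
      exact C_subset_Uf_of_queue hf (Nat.zero_le n) h0 hC0
    · obtain ⟨o', ⟨ho', hne⟩, hx1, hx2⟩ := Set.mem_iUnion₂.mp h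
      obtain ⟨k, hk, hxk⟩ := dir_Uf_subset hum ho' hx1
      obtain ⟨hkn, qk, hqk⟩ := mem_pset.mp hk
      obtain ⟨o₀, q₀, hq₀, he, hCo, hC, hnd, hmem⟩ := hf.2.1 k hkn
      rw [hqk] at hq₀
      injection hq₀ with ho₀ hq₀'
      subst ho₀; subst hq₀'
      have hxC : x ∈ (f (k + 1)).C o := by
        rw [hC o (Ne.symm hne)]
        exact Or.inr ⟨⟨hxk, hx2⟩, ⟨x, Or.inl hx2, hxk⟩⟩
      have hoQ : o ∈ (f (k + 1)).queue := by
        by_contra hno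
        have := notq hf (k + 1) hkn o hno
        rw [this] at hxC
        exact hxC
      exact C_subset_Uf_of_queue hf hkn hoQ hxC

/-- Any terminating execution produces exactly the canonical edge set. -/
lemma final_edges (hum : ∀ o A B, dirΔ o A ∪ dirΔ o B = dirΔ o (A ∪ B))
    (hf : Exec inS outS dirΔ Si f n) :
    (f n).edges = CanE inS outS dirΔ Si hum := by
  apply Set.Subset.antisymm
  · exact (upper hum hf n le_rfl).2.2
  · have hlow : OrderHom.lfp (Phi inS outS dirΔ Si hum) ≤ (Pf f n, Uf f n) :=
      OrderHom.lfp_le _ (prefixed hum hf)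
    have hP : Pstar inS outS dirΔ Si hum ⊆ Pf f n := hlow.1
    have hU : ∀ o, Ustar inS outS dirΔ Si hum o ⊆ Uf f n o := hlow.2
    rintro ⟨a, b⟩ ⟨haP, hba, hadj⟩
    simp only at haP hba hadj
    have haPf : a ∈ Pf f n := hP haP
    obtain ⟨x, hx1, hx2⟩ := hadj
    have hx2' : x ∈ dirΔ a (Uf f n a) := dmono hum (hU a) hx2
    obtain ⟨k, hk, hxk⟩ := dir_Uf_subset hum haPf hx2'
    obtain ⟨hkn, qk, hqk⟩ := mem_pset.mp hk
    obtain ⟨o₀, q₀, hq₀, he, hCo, hC, hnd, hmem⟩ := hf.2.1 k hkn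
    rw [hqk] at hq₀
    injection hq₀ with ho₀ hq₀'
    subst ho₀; subst hq₀'
    have : (a, b) ∈ (f (k + 1)).edges := by
      rw [he]
      exact Or.inr ⟨rfl, hba, ⟨x, hx1, hxk⟩⟩
    exact edges_mono hf n le_rfl (k + 1) hkn this

lemma hasCycle_mono {E E' : Set (O × O)} (h : E ⊆ E') (hc : HasCycle E) : HasCycle E' := by
  obtain ⟨v, hv⟩ := hc
  exact ⟨v, Relation.TransGen.mono (r := fun a b => (a, b) ∈ E) (fun a b hab => h hab) v v hv⟩

lemma allCycleIff (hf : Exec inS outS dirΔ Si f n) :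
    (∀ k ≤ n, ¬ HasCycle (f k).edges) ↔ ¬ HasCycle (f n).edges := by
  constructor
  · intro h; exact h n le_rfl
  · intro h k hk hc
    exact h (hasCycle_mono (edges_mono hf n le_rfl k hk) hc)

end Main

/-- Under union monotonic `dir_Δ` functions, the dependency-graph construction
either terminates without aborting for every possible queue ordering, or aborts
for every possible queue ordering: given two terminating executions for the
same eGDN and the same initially modified slots `Si`, one of them is cycle-free
throughout (non-aborting) if and only if the other one is. -/
theorem stmt10 {O S : Type*} (inS outS : O → Set S)
    (dirΔ : O → Set S → Set S)
    (hum : ∀ o A B, dirΔ o A ∪ dirΔ o B = dirΔ o (A ∪ B))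
    (Si : Set S)
    (f g : ℕ → CState O S) (n m : ℕ)
    (hf : Exec inS outS dirΔ Si f n)
    (hg : Exec inS outS dirΔ Si g m) :
    ((∀ k ≤ n, ¬ HasCycle (f k).edges) ↔ (∀ k ≤ m, ¬ HasCycle (g k).edges)) := by
  rw [allCycleIff hf, allCycleIff hg, final_edges hum hf, final_edges hum hg]
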